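/- Let Ω be a properly convex open domain in S^n (or ℝP^n), let S₁, ..., S_{l} be projective subspaces corresponding to linear subspaces V₁, ..., V_l of ℝ^{n+1} with Vᵢ ∩ Vⱼ = {0} for i ≠ j and V₁ ⊕ ⋯ ⊕ V_l = ℝ^{n+1}, and let G be a set of projective automorphisms preserving Ω and each Sᵢ. Set Ωᵢ := cl(Ω) ∩ Sᵢ. Assume: (a) for each i, the restrictions {g|Sᵢ : g ∈ G} form a bounded set of projective automorphisms of Sᵢ; and (b) for each i there is a sequence g_{i,j} ∈ G whose largest eigenvalue norm restricted to Sᵢ (relative to a normalization making the restrictions to the other factors bounded) tends to infinity. Then each Ωᵢ is nonempty and cl(Ω) equals the strict join Ω₁ * ⋯ * Ω_l. -/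

import Mathlib

open Filter Topology

/-- A properly convex open cone in `ℝ^{n+1}` (the cone over a properly convex domain
in `S^n`/`ℝP^n`). -/
def IsProperConvexCone {n : ℕ} (C : Set (EuclideanSpace ℝ (Fin (n + 1)))) : Prop :=
  IsOpen C ∧ Convex ℝ C ∧ C.Nonempty ∧ (0 : EuclideanSpace ℝ (Fin (n + 1))) ∉ C ∧
    (∀ r : ℝ, 0 < r → ∀ v ∈ C, r • v ∈ C) ∧
    ∀ v ∈ closure C, v ≠ 0 → -v ∉ closure C

set_option maxHeartbeats 1600000 in
theorem closure_eq_strict_join_of_bounded_and_unbounded_sequences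
    (n l : ℕ) (hl : 0 < l)
    (V : Fin l → Submodule ℝ (EuclideanSpace ℝ (Fin (n + 1))))
    (hVdisj : ∀ i j, i ≠ j → V i ⊓ V j = ⊥)
    (hVspan : ⨆ i, V i = ⊤)
    (C : Set (EuclideanSpace ℝ (Fin (n + 1))))
    (hC : IsProperConvexCone C)
    (G : Set ((EuclideanSpace ℝ (Fin (n + 1))) ≃ₗ[ℝ] (EuclideanSpace ℝ (Fin (n + 1)))))
    (hGC : ∀ g ∈ G, (g : EuclideanSpace ℝ (Fin (n + 1)) → EuclideanSpace ℝ (Fin (n + 1))) '' C = C)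
    (hGV : ∀ g ∈ G, ∀ i, (V i).map g.toLinearMap = V i)
    (hbounded : ∀ i, ∃ M : ℝ, 0 < M ∧ ∀ g ∈ G, ∀ v ∈ V i, ∀ w ∈ V i,
        ‖v‖ = 1 → ‖w‖ = 1 → ‖g v‖ ≤ M * ‖g w‖)
    (hunbounded : ∀ i, ∃ gs : ℕ → ((EuclideanSpace ℝ (Fin (n + 1))) ≃ₗ[ℝ] (EuclideanSpace ℝ (Fin (n + 1)))),
        (∀ j, gs j ∈ G) ∧
        (∀ k, k ≠ i → ∃ M : ℝ, ∀ j, ∀ v ∈ V k, ‖(gs j) v‖ ≤ M * ‖v‖) ∧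
        Filter.Tendsto (fun j => sSup {r : ℝ | ∃ v, v ∈ V i ∧ ‖v‖ = 1 ∧ r = ‖(gs j) v‖})
          Filter.atTop Filter.atTop) :
    (∀ i, ∃ v, v ∈ closure C ∩ (V i : Set (EuclideanSpace ℝ (Fin (n + 1)))) ∧ v ≠ 0) ∧
    closure C = {u | ∃ x : Fin l → EuclideanSpace ℝ (Fin (n + 1)),
        (∀ i, x i ∈ closure C ∩ (V i : Set (EuclideanSpace ℝ (Fin (n + 1))))) ∧ u = ∑ i, x i} := by
  classical
  obtain ⟨hCopen, hCconv, hCne, hC0, hCcone, hCsharp⟩ := hC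
  obtain ⟨u0, hu0⟩ := hCne
  set K := closure C with hKdef
  have hKclosed : IsClosed K := isClosed_closure
  -- cone facts
  have hsmulK : ∀ r : ℝ, 0 < r → ∀ v ∈ K, r • v ∈ K := by
    intro r hr v hv
    have h1 : (fun w : EuclideanSpace ℝ (Fin (n+1)) => r • w) '' C ⊆ C := by
      rintro _ ⟨w, hw, rfl⟩; exact hCcone r hr w hw
    have h2 := image_closure_subset_closure_image (s := C)
      (continuous_const_smul r)
    exact closure_mono h1 (h2 ⟨v, hv, rfl⟩)
  have h0K : (0 : EuclideanSpace ℝ (Fin (n+1))) ∈ K := by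
    have h1 : Tendsto (fun m : ℕ => ((m : ℝ)+1)⁻¹) atTop (𝓝 0) := by
      have : Tendsto (fun m : ℕ => 1 / ((m : ℝ) + 1)) atTop (𝓝 0) := tendsto_one_div_add_atTop_nhds_zero_nat
      simpa [one_div] using this
    have ht : Tendsto (fun m : ℕ => ((m : ℝ)+1)⁻¹ • u0) atTop (𝓝 (0 : EuclideanSpace ℝ (Fin (n+1)))) := by
      have := h1.smul_const u0
      simpa using this
    exact mem_closure_of_tendsto ht (Eventually.of_forall fun m =>
      hCcone _ (by positivity) u0 hu0)
  have haddK : ∀ x ∈ K, ∀ y ∈ K, x + y ∈ K := by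
    intro x hx y hy
    have h2 : (1/2 : ℝ) • x + (1/2 : ℝ) • y ∈ K :=
      hCconv.closure hx hy (by norm_num) (by norm_num) (by norm_num)
    have h3 := hsmulK 2 (by norm_num) _ h2
    have h4 : (2:ℝ) • ((1/2 : ℝ) • x + (1/2:ℝ) • y) = x + y := by
      rw [smul_add, smul_smul, smul_smul]; norm_num
    rwa [h4] at h3
  -- group facts
  have hgK : ∀ g ∈ G, ∀ v ∈ K, g v ∈ K := by
    intro g hg v hv
    have hc : Continuous ⇑g := g.toLinearMap.continuous_of_finiteDimensional
    have h2 := image_closure_subset_closure_image (s := C) hc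
    have h3 : closure (⇑g '' C) = K := by rw [hGC g hg]
    exact h3 ▸ h2 ⟨v, hv, rfl⟩
  have hgsymmC : ∀ g ∈ G, ⇑g.symm '' C = C := by
    intro g hg
    conv_lhs => rw [← hGC g hg]
    rw [← Set.image_comp]
    simp
  have hgsymmK : ∀ g ∈ G, ∀ v ∈ K, g.symm v ∈ K := by
    intro g hg v hv
    have hc : Continuous ⇑g.symm := g.symm.toLinearMap.continuous_of_finiteDimensional
    have h2 := image_closure_subset_closure_image (s := C) hc
    have h3 : closure (⇑g.symm '' C) = K := by rw [hgsymmC g hg]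
    exact h3 ▸ h2 ⟨v, hv, rfl⟩
  have hgV : ∀ g ∈ G, ∀ i, ∀ v ∈ V i, g v ∈ V i := by
    intro g hg i v hv
    have h1 := hGV g hg i
    rw [← h1]
    exact ⟨v, hv, rfl⟩
  have hgsymmV : ∀ g ∈ G, ∀ i, ∀ v ∈ V i, g.symm v ∈ V i := by
    intro g hg i v hv
    rw [← hGV g hg i] at hv
    obtain ⟨w, hw, rfl⟩ := hv
    simpa using hw
  -- data
  choose M hMpos hM using hbounded
  choose gs hgsG hgsB hgsT using hunbounded
  choose Mk hMk using hgsB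
  set lam : Fin l → ℕ → ℝ :=
    fun i j => sSup {r : ℝ | ∃ v, v ∈ V i ∧ ‖v‖ = 1 ∧ r = ‖(gs i j) v‖} with hlamdef
  have hlamT : ∀ i, Tendsto (lam i) atTop atTop := fun i => hgsT i
  have hunit : ∀ i, ∃ v, v ∈ V i ∧ ‖v‖ = 1 := by
    intro i
    obtain ⟨j, hj⟩ := ((hlamT i).eventually_ge_atTop 1).exists
    by_contra hcon
    push_neg at hcon
    have hempty : {r : ℝ | ∃ v, v ∈ V i ∧ ‖v‖ = 1 ∧ r = ‖(gs i j) v‖} = ∅ := by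
      ext r
      simp only [Set.mem_setOf_eq, Set.mem_empty_iff_false, iff_false]
      rintro ⟨v, hv, hn, rfl⟩
      exact hcon v hv hn
    have : lam i j = 0 := by
      rw [hlamdef]
      simp only [hempty]
      exact Real.sSup_empty
    rw [this] at hj
    linarith
  choose u0v hu0vV hu0vn using hunit
  have hbddA : ∀ i j, BddAbove {r : ℝ | ∃ v, v ∈ V i ∧ ‖v‖ = 1 ∧ r = ‖(gs i j) v‖} := by
    intro i j
    refine ⟨M i * ‖gs i j (u0v i)‖, ?_⟩
    rintro r ⟨v, hv, hn, rfl⟩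
    exact hM i (gs i j) (hgsG i j) v hv (u0v i) (hu0vV i) hn (hu0vn i)
  have hlam_pos : ∀ i j, 0 < lam i j := by
    intro i j
    have hmem : ‖gs i j (u0v i)‖ ∈ {r : ℝ | ∃ v, v ∈ V i ∧ ‖v‖ = 1 ∧ r = ‖(gs i j) v‖} :=
      ⟨u0v i, hu0vV i, hu0vn i, rfl⟩
    have h1 : ‖gs i j (u0v i)‖ ≤ lam i j := le_csSup (hbddA i j) hmem
    have h2 : 0 < ‖gs i j (u0v i)‖ := by
      rw [norm_pos_iff]
      intro h
      have h3 : u0v i = 0 := by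
        have h4 : gs i j (u0v i) = gs i j 0 := by simpa using h
        exact (gs i j).injective h4
      have h5 := hu0vn i
      rw [h3, norm_zero] at h5
      exact one_ne_zero h5.symm
    linarith
  have hupper : ∀ i j, ∀ v ∈ V i, ‖gs i j v‖ ≤ lam i j * ‖v‖ := by
    intro i j v hv
    rcases eq_or_ne v 0 with rfl | hvne
    · simp
    · have hnv : 0 < ‖v‖ := norm_pos_iff.mpr hvne
      set v' := ‖v‖⁻¹ • v with hv'def
      have hv' : v' ∈ V i := (V i).smul_mem _ hv
      have hn' : ‖v'‖ = 1 := by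
        rw [hv'def, norm_smul, Real.norm_eq_abs, abs_of_pos (inv_pos.mpr hnv),
          inv_mul_cancel₀ hnv.ne']
      have h1 : ‖gs i j v'‖ ≤ lam i j := le_csSup (hbddA i j) ⟨v', hv', hn', rfl⟩
      have h2 : gs i j v = ‖v‖ • gs i j v' := by
        rw [← map_smul]
        congr 1
        rw [hv'def, smul_smul, mul_inv_cancel₀ hnv.ne', one_smul]
      rw [h2, norm_smul, Real.norm_eq_abs, abs_of_pos hnv, mul_comm (lam i j) ‖v‖]
      exact mul_le_mul_of_nonneg_left h1 hnv.le
  have hlower : ∀ i j, ∀ v ∈ V i, lam i j * ‖v‖ ≤ M i * ‖gs i j v‖ := by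
    intro i j v hv
    rcases eq_or_ne v 0 with rfl | hvne
    · simp
    · have hnv : 0 < ‖v‖ := norm_pos_iff.mpr hvne
      set v' := ‖v‖⁻¹ • v with hv'def
      have hv' : v' ∈ V i := (V i).smul_mem _ hv
      have hn' : ‖v'‖ = 1 := by
        rw [hv'def, norm_smul, Real.norm_eq_abs, abs_of_pos (inv_pos.mpr hnv),
          inv_mul_cancel₀ hnv.ne']
      have h1 : lam i j ≤ M i * ‖gs i j v'‖ := by
        have hne' : {r : ℝ | ∃ v, v ∈ V i ∧ ‖v‖ = 1 ∧ r = ‖(gs i j) v‖}.Nonempty :=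
          ⟨_, u0v i, hu0vV i, hu0vn i, rfl⟩
        apply csSup_le hne' 
        rintro r ⟨w, hw, hwn, rfl⟩
        exact hM i (gs i j) (hgsG i j) w hw v' hv' hwn hn'
      have h2 : gs i j v = ‖v‖ • gs i j v' := by
        rw [← map_smul]
        congr 1
        rw [hv'def, smul_smul, mul_inv_cancel₀ hnv.ne', one_smul]
      rw [h2, norm_smul, Real.norm_eq_abs, abs_of_pos hnv]
      calc lam i j * ‖v‖ ≤ (M i * ‖gs i j v'‖) * ‖v‖ :=
            mul_le_mul_of_nonneg_right h1 hnv.le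
        _ = M i * (‖v‖ * ‖gs i j v'‖) := by ring
  -- the decomposition map
  set Φ : ((k : Fin l) → V k) →ₗ[ℝ] EuclideanSpace ℝ (Fin (n+1)) :=
    ∑ k, (V k).subtype ∘ₗ LinearMap.proj k with hΦdef
  have hΦapply : ∀ x, Φ x = ∑ k, ((x k : EuclideanSpace ℝ (Fin (n+1)))) := by
    intro x
    rw [hΦdef]
    simp [LinearMap.sum_apply]
  have hΦinj : Function.Injective Φ := by
    rw [injective_iff_map_eq_zero]
    intro x hx0
    rw [hΦapply] at hx0
    have hcomp : ∀ i, (x i : EuclideanSpace ℝ (Fin (n+1))) = 0 := by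
      intro i
      by_contra hne
      have hnx : 0 < ‖(x i : EuclideanSpace ℝ (Fin (n+1)))‖ := norm_pos_iff.mpr hne
      set B := ∑ k ∈ Finset.univ.erase i,
        (if h : k ≠ i then Mk i k h * ‖(x k : EuclideanSpace ℝ (Fin (n+1)))‖ else 0) with hBdef
      have hgb : ∀ j, ‖gs i j (x i)‖ ≤ B := by
        intro j
        have hsum : ∑ k, gs i j (x k : EuclideanSpace ℝ (Fin (n+1))) = 0 := by
          rw [← map_sum, hx0, map_zero]
        have h2 := Finset.sum_erase_add Finset.univ
          (fun k => gs i j (x k : EuclideanSpace ℝ (Fin (n+1)))) (Finset.mem_univ i)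
        rw [hsum] at h2
        have hxi : gs i j (x i : EuclideanSpace ℝ (Fin (n+1))) =
            - ∑ k ∈ Finset.univ.erase i, gs i j (x k : EuclideanSpace ℝ (Fin (n+1))) := by
          have := eq_neg_of_add_eq_zero_right h2
          simpa using this
        rw [hxi, norm_neg]
        refine (norm_sum_le _ _).trans ?_
        rw [hBdef]
        apply Finset.sum_le_sum
        intro k hk
        have hki : k ≠ i := Finset.ne_of_mem_erase hk
        rw [dif_pos hki]
        exact hMk i k hki j (x k) (x k).2
      have hub : ∀ j, lam i j ≤ M i * B / ‖(x i : EuclideanSpace ℝ (Fin (n+1)))‖ := by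
        intro j
        have h1 := hlower i j (x i) (x i).2
        have h2 := hgb j
        have h3 : lam i j * ‖(x i : EuclideanSpace ℝ (Fin (n+1)))‖ ≤ M i * B := by
          calc lam i j * ‖(x i : EuclideanSpace ℝ (Fin (n+1)))‖ ≤ M i * ‖gs i j (x i)‖ := h1
            _ ≤ M i * B := mul_le_mul_of_nonneg_left h2 (hMpos i).le
        rw [le_div_iff₀ hnx]
        exact h3
      obtain ⟨j, hj⟩ :=
        ((hlamT i).eventually_gt_atTop (M i * B / ‖(x i : EuclideanSpace ℝ (Fin (n+1)))‖)).exists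
      exact absurd (hub j) (not_le.mpr hj)
    funext i
    exact Subtype.ext (hcomp i)
  have hΦsurj : Function.Surjective Φ := by
    rw [← LinearMap.range_eq_top, eq_top_iff, ← hVspan]
    apply iSup_le
    intro k v hv
    refine ⟨Pi.single k ⟨v, hv⟩, ?_⟩
    rw [hΦapply, Finset.sum_eq_single k]
    · simp
    · intro m _ hmk
      simp [Pi.single_eq_of_ne hmk]
    · intro h
      exact absurd (Finset.mem_univ k) h
  set eΦ := LinearEquiv.ofBijective Φ ⟨hΦinj, hΦsurj⟩ with heΦdef
  set π : Fin l → EuclideanSpace ℝ (Fin (n+1)) →ₗ[ℝ] EuclideanSpace ℝ (Fin (n+1)) :=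
    fun i => (V i).subtype ∘ₗ (LinearMap.proj i) ∘ₗ (eΦ.symm : EuclideanSpace ℝ (Fin (n+1)) →ₗ[ℝ] ((k : Fin l) → V k)) with hπdef
  have hπmem : ∀ i u, π i u ∈ V i := fun i u => ((eΦ.symm u) i).2
  have hπsum : ∀ u, ∑ i, π i u = u := by
    intro u
    have h1 : ∑ i, π i u = Φ (eΦ.symm u) := by
      rw [hΦapply]
      rfl
    rw [h1]
    exact eΦ.apply_symm_apply u
  have hπsingle : ∀ i v (hv : v ∈ V i), eΦ.symm v = Pi.single i ⟨v, hv⟩ := by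
    intro i v hv
    have h1 : Φ (Pi.single i ⟨v, hv⟩) = v := by
      rw [hΦapply, Finset.sum_eq_single i]
      · simp
      · intro m _ hmk
        simp [Pi.single_eq_of_ne hmk]
      · intro h
        exact absurd (Finset.mem_univ i) h
    have h2 : eΦ (Pi.single i ⟨v, hv⟩) = v := h1
    rw [LinearEquiv.symm_apply_eq]
    exact h2.symm
  have hπid : ∀ i v, v ∈ V i → π i v = v := by
    intro i v hv
    show ((eΦ.symm v) i : EuclideanSpace ℝ (Fin (n+1))) = v
    rw [hπsingle i v hv]
    simp
  have hπzero : ∀ i k v, v ∈ V i → k ≠ i → π k v = 0 := by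
    intro i k v hv hki
    show ((eΦ.symm v) k : EuclideanSpace ℝ (Fin (n+1))) = 0
    rw [hπsingle i v hv]
    simp [Pi.single_eq_of_ne hki]
  set πL : Fin l → EuclideanSpace ℝ (Fin (n+1)) →L[ℝ] EuclideanSpace ℝ (Fin (n+1)) :=
    fun i => LinearMap.toContinuousLinearMap (π i) with hπLdef
  -- main step: projections preserve K
  have hmain : ∀ i, ∀ u ∈ K, π i u ∈ K := by
    intro i
    set L : ℕ → EuclideanSpace ℝ (Fin (n+1)) →L[ℝ] EuclideanSpace ℝ (Fin (n+1)) :=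
      fun j => LinearMap.toContinuousLinearMap
        ((lam i j)⁻¹ • ((gs i j).toLinearMap ∘ₗ π i)) with hLdef
    have hLapply : ∀ j u, L j u = (lam i j)⁻¹ • gs i j (π i u) := by
      intro j u
      rfl
    have hLnorm : ∀ j, ‖L j‖ ≤ ‖πL i‖ := by
      intro j
      apply ContinuousLinearMap.opNorm_le_bound _ (norm_nonneg _)
      intro u
      rw [hLapply, norm_smul, Real.norm_eq_abs, abs_of_pos (inv_pos.mpr (hlam_pos i j))]
      have h1 : ‖gs i j (π i u)‖ ≤ lam i j * ‖π i u‖ := hupper i j _ (hπmem i u)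
      have h2 : ‖π i u‖ ≤ ‖πL i‖ * ‖u‖ := (πL i).le_opNorm u
      calc (lam i j)⁻¹ * ‖gs i j (π i u)‖ ≤ (lam i j)⁻¹ * (lam i j * ‖π i u‖) :=
            mul_le_mul_of_nonneg_left h1 (inv_pos.mpr (hlam_pos i j)).le
        _ = ‖π i u‖ := by
            rw [← mul_assoc, inv_mul_cancel₀ (hlam_pos i j).ne', one_mul]
        _ ≤ ‖πL i‖ * ‖u‖ := h2
    obtain ⟨P, -, φ, hφ, hPtend⟩ := tendsto_subseq_of_bounded
      (Metric.isBounded_closedBall (x := (0 : EuclideanSpace ℝ (Fin (n+1)) →L[ℝ] EuclideanSpace ℝ (Fin (n+1)))) (r := ‖πL i‖))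
      (x := L) (fun j => mem_closedBall_zero_iff.mpr (hLnorm j))
    have hPnorm0 : Tendsto (fun j => ‖L (φ j) - P‖) atTop (𝓝 0) :=
      tendsto_iff_norm_sub_tendsto_zero.mp hPtend
    have hPpt : ∀ u, Tendsto (fun j => L (φ j) u) atTop (𝓝 (P u)) := by
      intro u
      rw [tendsto_iff_norm_sub_tendsto_zero]
      refine squeeze_zero (fun j => norm_nonneg _) (fun j => ?_)
        (by simpa using hPnorm0.mul_const ‖u‖)
      calc ‖L (φ j) u - P u‖ = ‖(L (φ j) - P) u‖ := by rw [ContinuousLinearMap.sub_apply]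
        _ ≤ ‖L (φ j) - P‖ * ‖u‖ := (L (φ j) - P).le_opNorm u
    have hPV : ∀ u, P u ∈ V i := by
      intro u
      apply (V i).closed_of_finiteDimensional.mem_of_tendsto (hPpt u)
      apply Eventually.of_forall
      intro j
      rw [hLapply]
      exact (V i).smul_mem _ (hgV _ (hgsG i (φ j)) i _ (hπmem i u))
    have hPlow : ∀ v ∈ V i, ‖v‖ ≤ M i * ‖P v‖ := by
      intro v hv
      have h1 : ∀ j, ‖v‖ ≤ M i * ‖L j v‖ := by
        intro j
        rw [hLapply, hπid i v hv, norm_smul, Real.norm_eq_abs,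
          abs_of_pos (inv_pos.mpr (hlam_pos i j))]
        have h2 := hlower i j v hv
        have hp := hlam_pos i j
        rw [mul_comm (lam i j)⁻¹ _, ← mul_assoc, ← div_eq_mul_inv, le_div_iff₀ hp,
          mul_comm ‖v‖ (lam i j)]
        linarith [h2]
      have h2 : Tendsto (fun j => M i * ‖L (φ j) v‖) atTop (𝓝 (M i * ‖P v‖)) :=
        ((hPpt v).norm).const_mul (M i)
      exact ge_of_tendsto' h2 (fun j => h1 (φ j))
    have hPinj : ∀ v ∈ V i, ∀ w ∈ V i, P v = P w → v = w := by
      intro v hv w hw hpw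
      have hsub : v - w ∈ V i := (V i).sub_mem hv hw
      have h1 := hPlow (v - w) hsub
      rw [map_sub, hpw, sub_self, norm_zero, mul_zero] at h1
      have h2 : ‖v - w‖ = 0 := le_antisymm h1 (norm_nonneg _)
      exact sub_eq_zero.mp (norm_eq_zero.mp h2)
    have hAK : ∀ j, ∀ u ∈ K, (lam i j)⁻¹ • gs i j u ∈ K := fun j u hu =>
      hsmulK _ (inv_pos.mpr (hlam_pos i j)) _ (hgK _ (hgsG i j) u hu)
    have hconv0 : ∀ u : EuclideanSpace ℝ (Fin (n+1)),
        Tendsto (fun j => (lam i (φ j))⁻¹ • gs i (φ j) u - L (φ j) u) atTop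
          (𝓝 (0 : EuclideanSpace ℝ (Fin (n+1)))) := by
      intro u
      have hdecomp : ∀ j, (lam i j)⁻¹ • gs i j u - L j u =
          ∑ k ∈ Finset.univ.erase i, (lam i j)⁻¹ • gs i j (π k u) := by
        intro j
        have h2 := Finset.sum_erase_add Finset.univ
          (fun k => gs i j (π k u)) (Finset.mem_univ i)
        have h3 : ∑ k, gs i j (π k u) = gs i j u := by
          rw [← map_sum, hπsum]
        rw [h3] at h2
        have h4 : ∑ k ∈ Finset.univ.erase i, gs i j (π k u) =
            gs i j u - gs i j (π i u) := eq_sub_of_add_eq h2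
        rw [hLapply, ← smul_sub, ← h4, Finset.smul_sum]
      set c : ℝ := ∑ k ∈ Finset.univ.erase i,
        (if h : k ≠ i then Mk i k h * ‖π k u‖ else 0) with hcdef
      have hbound : ∀ j, ‖∑ k ∈ Finset.univ.erase i, (lam i j)⁻¹ • gs i j (π k u)‖ ≤
          (lam i j)⁻¹ * c := by
        intro j
        refine (norm_sum_le _ _).trans ?_
        rw [hcdef, Finset.mul_sum]
        apply Finset.sum_le_sum
        intro k hk
        have hki : k ≠ i := Finset.ne_of_mem_erase hk
        rw [dif_pos hki, norm_smul, Real.norm_eq_abs, abs_of_pos (inv_pos.mpr (hlam_pos i j))]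
        exact mul_le_mul_of_nonneg_left (hMk i k hki j _ (hπmem k u))
          (inv_pos.mpr (hlam_pos i j)).le
      have hto0 : Tendsto (fun j => (lam i (φ j))⁻¹ * c) atTop (𝓝 0) := by
        have h1 : Tendsto (fun j => lam i (φ j)) atTop atTop :=
          (hlamT i).comp hφ.tendsto_atTop
        have h2 := h1.inv_tendsto_atTop.mul_const c
        simpa using h2
      rw [tendsto_zero_iff_norm_tendsto_zero]
      refine squeeze_zero (fun j => norm_nonneg _) (fun j => ?_) hto0
      rw [hdecomp (φ j)]
      exact hbound (φ j)
    have hPK : ∀ u ∈ K, P u ∈ K := by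
      intro u hu
      have h1 : Tendsto (fun j => (lam i (φ j))⁻¹ • gs i (φ j) u) atTop (𝓝 (P u)) := by
        have h2 := (hconv0 u).add (hPpt u)
        simpa using h2
      exact hKclosed.mem_of_tendsto h1 (Eventually.of_forall fun j => hAK (φ j) u hu)
    have hPsurj : ∀ y, y ∈ K → y ∈ V i → ∃ x, x ∈ K ∧ x ∈ V i ∧ P x = y := by
      intro y hyK hyV
      set xs : ℕ → EuclideanSpace ℝ (Fin (n+1)) :=
        fun j => lam i (φ j) • (gs i (φ j)).symm y with hxsdef
      have hxsK : ∀ j, xs j ∈ K := fun j =>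
        hsmulK _ (hlam_pos i (φ j)) _ (hgsymmK _ (hgsG i (φ j)) y hyK)
      have hxsV : ∀ j, xs j ∈ V i := fun j =>
        (V i).smul_mem _ (hgsymmV _ (hgsG i (φ j)) i y hyV)
      have hgxs : ∀ j, gs i (φ j) (xs j) = lam i (φ j) • y := by
        intro j
        rw [hxsdef]
        simp only [map_smul]
        congr 1
        exact (gs i (φ j)).apply_symm_apply y
      have hxsbd : ∀ j, ‖xs j‖ ≤ M i * ‖y‖ := by
        intro j
        have h1 := hlower i (φ j) (xs j) (hxsV j)
        have h2 : ‖gs i (φ j) (xs j)‖ = lam i (φ j) * ‖y‖ := by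
          rw [hgxs j, norm_smul, Real.norm_eq_abs, abs_of_pos (hlam_pos i (φ j))]
        rw [h2] at h1
        have hp := hlam_pos i (φ j)
        have h3 : lam i (φ j) * ‖xs j‖ ≤ lam i (φ j) * (M i * ‖y‖) := by
          refine h1.trans (le_of_eq ?_)
          ring
        exact le_of_mul_le_mul_left h3 hp
      obtain ⟨x0, -, ψ, hψ, hxt⟩ := tendsto_subseq_of_bounded
        (Metric.isBounded_closedBall (x := (0 : EuclideanSpace ℝ (Fin (n+1)))) (r := M i * ‖y‖))
        (x := xs) (fun j => mem_closedBall_zero_iff.mpr (hxsbd j))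
      have hx0K : x0 ∈ K := hKclosed.mem_of_tendsto hxt (Eventually.of_forall fun j => hxsK (ψ j))
      have hx0V : x0 ∈ V i :=
        (V i).closed_of_finiteDimensional.mem_of_tendsto hxt (Eventually.of_forall fun j => hxsV (ψ j))
      refine ⟨x0, hx0K, hx0V, ?_⟩
      have hop0 : Tendsto (fun j => ‖L (φ (ψ j)) - P‖) atTop (𝓝 0) :=
        tendsto_iff_norm_sub_tendsto_zero.mp (hPtend.comp hψ.tendsto_atTop)
      have hxt0 : Tendsto (fun j => ‖xs (ψ j) - x0‖) atTop (𝓝 0) :=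
        tendsto_iff_norm_sub_tendsto_zero.mp hxt
      have heval : Tendsto (fun j => L (φ (ψ j)) (xs (ψ j))) atTop (𝓝 (P x0)) := by
        rw [tendsto_iff_norm_sub_tendsto_zero]
        refine squeeze_zero
          (g := fun j => ‖πL i‖ * ‖xs (ψ j) - x0‖ + ‖L (φ (ψ j)) - P‖ * ‖x0‖)
          (fun j => norm_nonneg _) (fun j => ?_) ?_
        · have ht : ‖L (φ (ψ j)) (xs (ψ j)) - P x0‖ ≤
              ‖L (φ (ψ j)) (xs (ψ j)) - L (φ (ψ j)) x0‖ + ‖L (φ (ψ j)) x0 - P x0‖ := by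
            have := dist_triangle (L (φ (ψ j)) (xs (ψ j))) (L (φ (ψ j)) x0) (P x0)
            simpa [dist_eq_norm] using this
          have hA : ‖L (φ (ψ j)) (xs (ψ j)) - L (φ (ψ j)) x0‖ ≤
              ‖πL i‖ * ‖xs (ψ j) - x0‖ := by
            rw [← map_sub]
            refine ((L (φ (ψ j))).le_opNorm _).trans ?_
            exact mul_le_mul_of_nonneg_right (hLnorm (φ (ψ j))) (norm_nonneg _)
          have hB : ‖L (φ (ψ j)) x0 - P x0‖ ≤ ‖L (φ (ψ j)) - P‖ * ‖x0‖ := by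
            rw [← ContinuousLinearMap.sub_apply]
            exact (L (φ (ψ j)) - P).le_opNorm _
          exact ht.trans (add_le_add hA hB)
        · have h5 := (hxt0.const_mul ‖πL i‖).add (hop0.mul_const ‖x0‖)
          simpa using h5
      have hval : ∀ j, L (φ (ψ j)) (xs (ψ j)) = y := by
        intro j
        rw [hLapply, hπid i _ (hxsV (ψ j)), hgxs (ψ j), smul_smul,
          inv_mul_cancel₀ (hlam_pos i (φ (ψ j))).ne', one_smul]
      rw [show (fun j => L (φ (ψ j)) (xs (ψ j))) = fun _ => y from funext hval] at heval
      exact (tendsto_nhds_unique tendsto_const_nhds heval).symm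
    intro u hu
    have h1 : P u ∈ K := hPK u hu
    have h2 : P u = P (π i u) := by
      have h3 : ∀ j, L j (π i u) = L j u := by
        intro j
        rw [hLapply, hLapply, hπid i (π i u) (hπmem i u)]
      have h4 := hPpt (π i u)
      rw [show (fun j => L (φ j) (π i u)) = (fun j => L (φ j) u) from funext fun j => h3 (φ j)] at h4
      exact tendsto_nhds_unique (hPpt u) h4
    obtain ⟨x, hxK, hxV, hPx⟩ := hPsurj (P u) h1 (hPV u)
    have h5 : x = π i u := hPinj x hxV (π i u) (hπmem i u) (by rw [hPx, h2])
    rwa [← h5]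
  -- nonemptiness
  have hne : ∀ i, ∃ v, v ∈ K ∧ v ∈ V i ∧ v ≠ 0 := by
    intro i
    by_cases hz : π i u0 = 0
    · obtain ⟨ε, hε, hball⟩ := Metric.isOpen_iff.mp hCopen u0 hu0
      set u' := u0 + (ε/2) • u0v i with hu'def
      have hu'C : u' ∈ C := by
        apply hball
        rw [Metric.mem_ball, dist_eq_norm, hu'def]
        have : u0 + (ε/2) • u0v i - u0 = (ε/2) • u0v i := by abel
        rw [this, norm_smul, Real.norm_eq_abs, abs_of_pos (by linarith), hu0vn i, mul_one]
        linarith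
      have hπu' : π i u' = (ε/2) • u0v i := by
        rw [hu'def, map_add, hz, zero_add, map_smul, hπid i (u0v i) (hu0vV i)]
      refine ⟨π i u', hmain i u' (subset_closure hu'C), hπmem i u', ?_⟩
      rw [hπu']
      intro h
      rcases smul_eq_zero.mp h with h1 | h2
      · linarith
      · have h5 := hu0vn i
        rw [h2, norm_zero] at h5
        exact one_ne_zero h5.symm
    · exact ⟨π i u0, hmain i u0 (subset_closure hu0), hπmem i u0, hz⟩
  -- assembly
  constructor
  · intro i
    obtain ⟨v, h1, h2, h3⟩ := hne i
    exact ⟨v, ⟨h1, h2⟩, h3⟩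
  · ext u
    simp only [Set.mem_setOf_eq]
    constructor
    · intro hu
      exact ⟨fun k => π k u, fun k => ⟨hmain k u hu, hπmem k u⟩, (hπsum u).symm⟩
    · rintro ⟨x, hx, rfl⟩
      have hsK : ∀ s : Finset (Fin l), ∑ k ∈ s, x k ∈ K := by
        intro s
        induction s using Finset.induction with
        | empty => simpa using h0K
        | insert a s hns ih =>
          rw [Finset.sum_insert hns]
          exact haddK _ ((hx _).1) _ ih
      exact hsK Finset.univ
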